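/- Let α̃, β̃ ∈ ℂ, let V ⊆ ℂ be a nonempty open connected set, and let x, y : V → ℂ be differentiable functions solving the Kecker Hamiltonian system x'(z) = y(z)² + z·x(z) + α̃, y'(z) = −x(z)² − z·y(z) − β̃ on V, such that x(z) + y(z) − z ≠ 0 for all z ∈ V. Let c = (1+i)/3^{1/4} (so c⁴ = −4/3) and let U = {t ∈ ℂ : c·t ∈ V}. Define w : U → ℂ by w(t) = (2/(3c))·(x(ct) + y(ct) − ct). Then w is twice differentiable and satisfies the fourth Painlevé equation w'' = (w')²/(2w) + (3/2)w³ + 4t·w² + 2(t² − α)w + β/w on U with parameters α = (i/√3)(α̃ + β̃) and β = −(2/9)(1 − α̃ + β̃)². -/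

import Mathlib

open Complex

set_option maxHeartbeats 2000000 in
/-- a solution `(x, y)` of the Kecker Hamiltonian system for P_IV with
parameters `α̃, β̃` (with `x + y − z` nonvanishing) yields, via
`w(t) = (2/(3c))(x(ct) + y(ct) − ct)` with `c = (1+i)/3^(1/4)`, a solution `w` of
the fourth Painlevé equation with parameters `α = (i/√3)(α̃ + β̃)`,
`β = −(2/9)(1 − α̃ + β̃)²`. -/
theorem kecker_hamiltonian_system_gives_PIV
    (αk βk : ℂ) (V : Set ℂ)
    (hVo : IsOpen V) (hVne : V.Nonempty) (hVc : IsPreconnected V)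
    (x y : ℂ → ℂ)
    (hx : ∀ z ∈ V, HasDerivAt x ((y z) ^ 2 + z * x z + αk) z)
    (hy : ∀ z ∈ V, HasDerivAt y (-(x z) ^ 2 - z * y z - βk) z)
    (hne : ∀ z ∈ V, x z + y z - z ≠ 0)
    (c : ℂ) (hc : c = (1 + I) / Complex.ofReal ((3 : ℝ) ^ ((1 : ℝ) / 4)))
    (U : Set ℂ) (hU : U = {t : ℂ | c * t ∈ V})
    (w : ℂ → ℂ)
    (hw_def : ∀ t, w t = (2 / (3 * c)) * (x (c * t) + y (c * t) - c * t))
    (α β : ℂ)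
    (hα : α = (I / (Real.sqrt 3 : ℂ)) * (αk + βk))
    (hβ : β = -(2 / 9) * (1 - αk + βk) ^ 2) :
    ∀ t ∈ U, DifferentiableAt ℂ w t ∧ DifferentiableAt ℂ (deriv w) t ∧
      deriv (deriv w) t =
        (deriv w t) ^ 2 / (2 * w t) + 3 / 2 * (w t) ^ 3 + 4 * t * (w t) ^ 2
          + 2 * (t ^ 2 - α) * w t + β / w t := by
  -- basic facts about c
  set r : ℝ := (3:ℝ) ^ ((1:ℝ)/4) with hr
  have hrpos : (0:ℝ) < r := Real.rpow_pos_of_pos (by norm_num) _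
  have hrne : (r : ℂ) ≠ 0 := by
    simpa using hrpos.ne'
  have hr4 : ((r : ℂ)) ^ (4:ℕ) = 3 := by
    rw [← Complex.ofReal_pow]
    norm_cast
    rw [hr, ← Real.rpow_natCast ((3:ℝ) ^ ((1:ℝ)/4)) 4, ← Real.rpow_mul (by norm_num)]
    norm_num
  have hc0 : c ≠ 0 := by
    rw [hc]
    apply div_ne_zero _ hrne
    intro h
    have := congrArg Complex.im h
    simp at this
  have hc4 : c ^ 4 = -4/3 := by
    rw [hc, div_pow]
    rw [show ((1:ℂ) + I)^4 = -4 by linear_combination (I^2 + 4*I + 5) * Complex.I_sq]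
    rw [hr4]
  have hs3 : (Real.sqrt 3 : ℂ) = (r : ℂ) ^ (2:ℕ) := by
    rw [← Complex.ofReal_pow]
    norm_cast
    rw [Real.sqrt_eq_rpow, hr, ← Real.rpow_natCast ((3:ℝ) ^ ((1:ℝ)/4)) 2,
      ← Real.rpow_mul (by norm_num)]
    norm_num
  have hα2 : α = c ^ 2 * (αk + βk) / 2 := by
    rw [hα, hc, div_pow, hs3]
    have h2 : ((1:ℂ) + I)^2 = 2*I := by linear_combination Complex.I_sq
    field_simp [h2]
    linear_combination -(αk + βk) * Complex.I_sq
  -- openness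
  have hUopen : IsOpen U := by
    rw [hU]
    exact hVo.preimage (continuous_const.mul continuous_id)
  have hmem : ∀ u ∈ U, c * u ∈ V := by
    intro u hu; rw [hU] at hu; exact hu
  -- first derivative function
  set W1 : ℂ → ℂ := fun u => (2/3) * (((y (c*u)) ^ 2 + (c*u) * x (c*u) + αk)
      + (-(x (c*u)) ^ 2 - (c*u) * y (c*u) - βk) - 1) with hW1
  have hid : ∀ u : ℂ, HasDerivAt (fun v : ℂ => c * v) c u := by
    intro u
    simpa using (hasDerivAt_id u).const_mul c
  have hxc : ∀ u ∈ U, HasDerivAt (fun v => x (c*v))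
      (((y (c*u)) ^ 2 + (c*u) * x (c*u) + αk) * c) u := by
    intro u hu
    exact HasDerivAt.comp u (hx _ (hmem u hu)) (hid u)
  have hyc : ∀ u ∈ U, HasDerivAt (fun v => y (c*v))
      ((-(x (c*u)) ^ 2 - (c*u) * y (c*u) - βk) * c) u := by
    intro u hu
    exact HasDerivAt.comp u (hy _ (hmem u hu)) (hid u)
  have hw1 : ∀ u ∈ U, HasDerivAt w (W1 u) u := by
    intro u hu
    have h := ((((hxc u hu).add (hyc u hu)).sub (hid u)).const_mul (2/(3*c)))
    have hweq : w = fun v => (2 / (3 * c)) * (x (c * v) + y (c * v) - c * v) :=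
      funext hw_def
    rw [hweq]
    refine h.congr_deriv ?_
    rw [hW1]
    field_simp
  intro t ht
  have hz : c * t ∈ V := hmem t ht
  -- second derivative
  set Xd : ℂ := (y (c*t)) ^ 2 + (c*t) * x (c*t) + αk with hXd
  set Yd : ℂ := -(x (c*t)) ^ 2 - (c*t) * y (c*t) - βk with hYd
  have h2 : HasDerivAt W1
      ((2/3) * (2 * y (c*t) ^ 1 * (Yd * c) + (c * x (c*t) + (c*t) * (Xd * c))
        + (-(2 * x (c*t) ^ 1 * (Xd * c)) - (c * y (c*t) + (c*t) * (Yd * c))))) t := by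
    have hy2 : HasDerivAt (fun v => (y (c*v)) ^ 2) (2 * y (c*t) ^ 1 * (Yd * c)) t :=
      (hyc t ht).pow 2
    have hx2 : HasDerivAt (fun v => (x (c*v)) ^ 2) (2 * x (c*t) ^ 1 * (Xd * c)) t :=
      (hxc t ht).pow 2
    have htx : HasDerivAt (fun v => (c*v) * x (c*v)) (c * x (c*t) + (c*t) * (Xd * c)) t :=
      (hid t).mul (hxc t ht)
    have hty : HasDerivAt (fun v => (c*v) * y (c*v)) (c * y (c*t) + (c*t) * (Yd * c)) t :=
      (hid t).mul (hyc t ht)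
    exact ((((hy2.add htx).add_const αk).add (((hx2.neg.sub hty).sub_const βk))).sub_const 1).const_mul (2/3)
  have hEv : deriv w =ᶠ[nhds t] W1 := by
    filter_upwards [hUopen.mem_nhds ht] with u hu
    exact (hw1 u hu).deriv
  have hd2 : HasDerivAt (deriv w)
      ((2/3) * (2 * y (c*t) ^ 1 * (Yd * c) + (c * x (c*t) + (c*t) * (Xd * c))
        + (-(2 * x (c*t) ^ 1 * (Xd * c)) - (c * y (c*t) + (c*t) * (Yd * c))))) t :=
    h2.congr_of_eventuallyEq hEv
  refine ⟨(hw1 t ht).differentiableAt, hd2.differentiableAt, ?_⟩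
  have hdw : deriv w t = W1 t := (hw1 t ht).deriv
  have hddw := hd2.deriv
  have hsne : x (c*t) + y (c*t) - c*t ≠ 0 := by
    have := hne _ hz; simpa using this
  have hcw : (2:ℂ)/(3*c) = -(1/2)*c^3 := by
    rw [div_eq_iff (by simp [hc0] : (3:ℂ)*c ≠ 0)]
    linear_combination (3/2) * hc4
  have hwp : w t = -(1/2)*c^3 * (x (c*t) + y (c*t) - c*t) := by
    rw [hw_def, hcw]
  have hwne2 : -(1/2)*c^3 * (x (c*t) + y (c*t) - c*t) ≠ 0 := by
    apply mul_ne_zero _ hsne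
    simp [hc0]
  rw [hddw, hdw]
  have hwne : w t ≠ 0 := by rw [hwp]; exact hwne2
  have hrhs : (W1 t)^2/(2 * w t) + 3/2*(w t)^3 + 4*t*(w t)^2 + 2*(t^2-α)*(w t) + β/(w t)
      = ((W1 t)^2/2 + 3/2*(w t)^4 + 4*t*(w t)^3 + 2*(t^2-α)*(w t)^2 + β)/(w t) := by
    field_simp
  rw [hrhs, eq_div_iff hwne]
  simp only [hW1, hwp, hα2, hβ]
  linear_combination ((1/4)*t^2*βk*c^6 + (1/4)*t^2*αk*c^6 + (-3/8)*t^4*c^8 + (-3/32)*t^4*c^12 + (-1/3)*y (c*t)*t*c + (-1/3)*y (c*t)*t*βk*c + (-1/2)*y (c*t)*t*βk*c^5 + (1/3)*y (c*t)*t*αk*c + (-1/2)*y (c*t)*t*αk*c^5 + 1*y (c*t)*t^3*c^7 + (3/8)*y (c*t)*t^3*c^11 + (1/3)*y (c*t)^2 + (1/3)*y (c*t)^2*βk + (1/4)*y (c*t)^2*βk*c^4 + (-1/3)*y (c*t)^2*αk + (1/4)*y (c*t)^2*αk*c^4 + (-1/6)*y (c*t)^2*t^2*c^2 + (-3/4)*y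 (c*t)^2*t^2*c^6 + (-9/16)*y (c*t)^2*t^2*c^10 + (1/3)*y (c*t)^3*t*c + (3/8)*y (c*t)^3*t*c^9 + (-1/6)*y (c*t)^4 + (1/8)*y (c*t)^4*c^4 + (-3/32)*y (c*t)^4*c^8 + (1/3)*x (c*t)*t*c + (1/3)*x (c*t)*t*βk*c + (-1/2)*x (c*t)*t*βk*c^5 + (-1/3)*x (c*t)*t*αk*c + (-1/2)*x (c*t)*t*αk*c^5 + 1*x (c*t)*t^3*c^7 + (3/8)*x (c*t)*t^3*c^11 + (1/2)*x (c*t)*y (c*t)*βk*c^4 + (1/2)*x (c*t)*y (c*t)*αk*c^4 + (1/3)*x (c*t)*y (c*t)*t^2*c^2 + (-3/2)*x (c*t)*y (c*t)*t^2*c^6 + (-9/8)*x (c*t)*y (c*t)*t^2*c^10 + (-1/3)*x (c*t)*y (c*t)^2*t*c + (9/8)*x (c*t)*y (c*t)^2*t*c^9 + (1/2)*x (c*t)*y (c*t)^3*c^4 + (-3/8)*x (c*t)*y (c*t)^3*c^8 + (-1/3)*x (c*t)^2 + (-1/3)*x (c*t)^2*βk + (1/4)*x (c*t)^2*βk*c^4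 + (1/3)*x (c*t)^2*αk + (1/4)*x (c*t)^2*αk*c^4 + (-1/6)*x (c*t)^2*t^2*c^2 + (-3/4)*x (c*t)^2*t^2*c^6 + (-9/16)*x (c*t)^2*t^2*c^10 + (-1/3)*x (c*t)^2*y (c*t)*t*c + (9/8)*x (c*t)^2*y (c*t)*t*c^9 + (1/3)*x (c*t)^2*y (c*t)^2 + (3/4)*x (c*t)^2*y (c*t)^2*c^4 + (-9/16)*x (c*t)^2*y (c*t)^2*c^8 + (1/3)*x (c*t)^3*t*c + (3/8)*x (c*t)^3*t*c^9 + (1/2)*x (c*t)^3*y (c*t)*c^4 + (-3/8)*x (c*t)^3*y (c*t)*c^8 + (-1/6)*x (c*t)^4 + (1/8)*x (c*t)^4*c^4 + (-3/32)*x (c*t)^4*c^8) * hc4
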